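/- arXiv:1109.6607 — 3 statements merged into one kernel-verified Lean document; each statement's English description precedes it below -/
import Mathlib

section
/- Let A be a symmetric linear operator on a real n-dimensional inner product space (n ≥ 2), r a real number, and l ≥ 1 a natural number. Then the k-th elementary symmetric function of the eigenvalues of Id + r^l·A satisfies σ_k(Id + r^l·A) = C(n,k) + C(n-1,k-1)·r^l·tr(A) + O(r^{2l}) as r → 0, for 1 ≤ k ≤ n-1. -/
open Asymptotics

open Polynomial Matrix


lemma charpoly_one_add' {n : ℕ} {S : Type*} [CommRing S] (M : Matrix (Fin n) (Fin n) S) :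
    (1 + M).charpoly = M.charpoly.comp (X - 1) := by
  have h : M.charpoly.comp (X - 1) =
      (eval₂RingHom (C : S →+* S[X]) (X - 1)) M.charpoly := rfl
  rw [h, Matrix.charpoly, Matrix.charpoly, RingHom.map_det]
  congr 1
  ext i j
  by_cases hij : i = j
  · subst hij
    simp [charmatrix_apply_eq, Matrix.add_apply, Matrix.one_apply, map_add, C_1]
    ring
  · simp [charmatrix_apply_ne _ _ _ hij, Matrix.add_apply, Matrix.one_apply_ne hij]

/-- σ_k(Id + r^l·A) = C(n,k) + C(n-1,k-1)·r^l·tr A + O(r^{2l}) as r → 0,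
where σ_k is the k-th elementary symmetric function of the eigenvalues, read off
from the characteristic polynomial det(λI - A) = Σ (-1)^k σ_k(A) λ^{n-k}. -/
theorem stmt0 {n : ℕ} (hn : 2 ≤ n) (l : ℕ) (hl : 1 ≤ l) (k : ℕ)
    (hk1 : 1 ≤ k) (hk2 : k ≤ n - 1)
    (A : Matrix (Fin n) (Fin n) ℝ) (hA : A.IsSymm) :
    (fun r : ℝ =>
        (-1 : ℝ) ^ k * ((1 + r ^ l • A).charpoly.coeff (n - k)) -
          ((n.choose k : ℝ) + ((n - 1).choose (k - 1) : ℝ) * r ^ l * A.trace))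
      =O[nhds (0 : ℝ)] fun r : ℝ => r ^ (2 * l) := by
  haveI : Nonempty (Fin n) := ⟨⟨0, by omega⟩⟩
  set M : Matrix (Fin n) (Fin n) ℝ[X] := (X : ℝ[X]) • A.map C with hM
  set P : (ℝ[X])[X] := M.charpoly with hP
  have hcard : Fintype.card (Fin n) = n := Fintype.card_fin n
  have hPdeg : P.natDegree = n := by rw [hP, Matrix.charpoly_natDegree_eq_dim, hcard]
  have hPn : P.coeff n = 1 := by
    have := (Matrix.charpoly_monic M).coeff_natDegree
    rwa [← hP, hPdeg] at this
  have htr : M.trace = X * C A.trace := by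
    simp [hM, Matrix.trace, Matrix.diag, Finset.mul_sum, map_sum, smul_eq_mul]
  have hPn1 : P.coeff (n - 1) = -(X * C A.trace) := by
    have h := Matrix.trace_eq_neg_charpoly_coeff M
    rw [hcard, ← hP] at h
    rw [← htr, h, neg_neg]
  have hlow : ∀ m, m < n - 1 → (X ^ 2 : ℝ[X]) ∣ P.coeff m := by
    intro m hm
    have h1 : ∀ i j, M i j ∈ Ideal.span {(X : ℝ[X])} := by
      intro i j
      rw [Ideal.mem_span_singleton]
      exact ⟨C (A i j), by simp [hM, smul_eq_mul]⟩
    have h2 := Matrix.coeff_charpoly_mem_ideal_pow h1 m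
    rw [hcard, Ideal.span_singleton_pow, Ideal.mem_span_singleton] at h2
    exact dvd_trans (pow_dvd_pow X (by omega)) h2
  set q : ℝ[X] := (1 + M).charpoly.coeff (n - k) with hq
  set c₀ : ℝ := (-1) ^ k * n.choose k with hc₀
  set c₁ : ℝ := (-1) ^ k * (n - 1).choose (k - 1) * A.trace with hc₁
  have hqsum : q = ∑ m ∈ Finset.range (n + 1),
      P.coeff m * (((X : (ℝ[X])[X]) - 1) ^ m).coeff (n - k) := by
    rw [hq, charpoly_one_add' M, ← hP, comp_eq_sum_left,
      Polynomial.sum_over_range' P (by simp) (n + 1) (by omega),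
      finset_sum_coeff]
    exact Finset.sum_congr rfl fun m _ => by rw [coeff_C_mul]
  have hcoeffpow : ∀ m, (((X : (ℝ[X])[X]) - 1) ^ m).coeff (n - k)
      = (-1 : ℝ[X]) ^ (m - (n - k)) * (m.choose (n - k) : ℝ[X]) := by
    intro m
    rw [show ((X : (ℝ[X])[X]) - 1) = X + C (-1) by
        rw [C_neg, C_1, ← sub_eq_add_neg], coeff_X_add_C_pow]
  have hsgnP : (-1 : ℝ[X]) ^ k = (-1) ^ (k - 1) * -1 := by
    conv_lhs => rw [show k = (k - 1) + 1 by omega, pow_succ]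
  have hdvd : (X ^ 2 : ℝ[X]) ∣ q - (C c₀ + C c₁ * X) := by
    have hsplit : q = (∑ m ∈ Finset.range (n - 1),
        P.coeff m * (((X : (ℝ[X])[X]) - 1) ^ m).coeff (n - k))
        + (P.coeff (n - 1) * (((X : (ℝ[X])[X]) - 1) ^ (n - 1)).coeff (n - k)
        + P.coeff n * (((X : (ℝ[X])[X]) - 1) ^ n).coeff (n - k)) := by
      rw [hqsum, show n + 1 = (n - 1) + 1 + 1 by omega, Finset.sum_range_succ,
        Finset.sum_range_succ, show n - 1 + 1 = n by omega]
      ring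
    have hmain : P.coeff (n - 1) * (((X : (ℝ[X])[X]) - 1) ^ (n - 1)).coeff (n - k)
        + P.coeff n * (((X : (ℝ[X])[X]) - 1) ^ n).coeff (n - k)
        = C c₀ + C c₁ * X := by
      rw [hPn1, hPn, hcoeffpow, hcoeffpow,
        show (n - 1) - (n - k) = k - 1 by omega,
        show n - (n - k) = k by omega,
        show (n - 1).choose (n - k) = (n - 1).choose (k - 1) by
          rw [← Nat.choose_symm (show k - 1 ≤ n - 1 by omega)]
          congr 1; omega,
        show n.choose (n - k) = n.choose k from Nat.choose_symm (by omega),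
        hc₀, hc₁]
      simp only [C_mul, C_neg, C_1, map_natCast, map_pow]
      rw [hsgnP]
      ring
    rw [hsplit, hmain, add_sub_cancel_right]
    exact Finset.dvd_sum fun m hm =>
      Dvd.dvd.mul_right (hlow m (Finset.mem_range.mp hm)) _
  obtain ⟨g, hg⟩ := hdvd
  have heval : ∀ t : ℝ, (1 + t • A).charpoly.coeff (n - k) = q.eval t := by
    intro t
    have hmap : (1 + M).map (evalRingHom t) = 1 + t • A := by
      ext i j
      rw [Matrix.map_apply, Matrix.add_apply, Matrix.add_apply, hM,
        Matrix.smul_apply, Matrix.map_apply, Matrix.smul_apply, smul_eq_mul,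
        smul_eq_mul]
      rw [coe_evalRingHom]
      by_cases hij : i = j
      · subst hij
        rw [Matrix.one_apply_eq, Matrix.one_apply_eq]
        simp only [eval_add, eval_one, eval_mul, eval_X, eval_C]
      · rw [Matrix.one_apply_ne hij, Matrix.one_apply_ne hij]
        simp only [eval_add, eval_zero, eval_mul, eval_X, eval_C, zero_add]
    rw [← hmap, Matrix.charpoly_map, Polynomial.coeff_map, hq, coe_evalRingHom]
  have hqeval : ∀ t : ℝ, q.eval t = c₀ + c₁ * t + t ^ 2 * g.eval t := by
    intro t
    have h2 := congrArg (Polynomial.eval t) hg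
    simp only [eval_sub, eval_add, eval_mul, eval_pow, eval_C, eval_X] at h2
    linarith
  have hkey : ∀ r : ℝ,
      (-1 : ℝ) ^ k * ((1 + r ^ l • A).charpoly.coeff (n - k)) -
          ((n.choose k : ℝ) + ((n - 1).choose (k - 1) : ℝ) * r ^ l * A.trace)
        = ((-1 : ℝ) ^ k * g.eval (r ^ l)) * r ^ (2 * l) := by
    intro r
    have hsq : ((-1 : ℝ) ^ k) * ((-1) ^ k) = 1 := by
      rw [← pow_add]; exact Even.neg_one_pow ⟨k, rfl⟩
    rw [heval, hqeval, hc₀, hc₁, show (2 : ℕ) * l = l * 2 from mul_comm 2 l, pow_mul]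
    linear_combination ((n.choose k : ℝ)
      + ((n - 1).choose (k - 1) : ℝ) * A.trace * r ^ l) * hsq
  have hcont : Continuous fun r : ℝ => (-1 : ℝ) ^ k * g.eval (r ^ l) :=
    continuous_const.mul ((g.continuous).comp (continuous_pow l))
  calc (fun r : ℝ =>
        (-1 : ℝ) ^ k * ((1 + r ^ l • A).charpoly.coeff (n - k)) -
          ((n.choose k : ℝ) + ((n - 1).choose (k - 1) : ℝ) * r ^ l * A.trace))
      = fun r : ℝ => ((-1 : ℝ) ^ k * g.eval (r ^ l)) * r ^ (2 * l) := funext hkey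
    _ =O[nhds (0 : ℝ)] fun r : ℝ => r ^ (2 * l) := by
        have h1 : (fun r : ℝ => (-1 : ℝ) ^ k * g.eval (r ^ l))
            =O[nhds (0 : ℝ)] (fun _ => (1 : ℝ)) :=
          (hcont.tendsto 0).isBigO_one ℝ
        simpa using h1.mul (isBigO_refl (fun r : ℝ => r ^ (2 * l)) (nhds 0))
end

section
/- Let A, B, C(t) be smooth operator families with C symmetric, and suppose 16·tr(C'(t)∘C(t)^2) - 3·tr(C'(t)∘C''(t)) = 0 for all t. Then the function t ↦ tr(32·C(t)^3 - 9·C'(t)∘C'(t)) is constant. In particular, in a Riemannian manifold where L_3 = L_5 = L_7 = 0, the quantity tr(32 R_v^3 - 9 R_v' ∘ R_v') is invariant under the geodesic flow. -/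
theorem hasDerivAt_entry_mul {n : ℕ} (A B : ℝ → Matrix (Fin n) (Fin n) ℝ)
    (A' B' : Matrix (Fin n) (Fin n) ℝ) (t : ℝ)
    (hA : ∀ i j, HasDerivAt (fun s => A s i j) (A' i j) t)
    (hB : ∀ i j, HasDerivAt (fun s => B s i j) (B' i j) t) (i j : Fin n) :
    HasDerivAt (fun s => (A s * B s) i j) ((A' * B t + A t * B') i j) t := by
  simp only [Matrix.mul_apply, Matrix.add_apply, ← Finset.sum_add_distrib]
  exact HasDerivAt.fun_sum fun k _ => (hA i k).mul (hB k j)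

theorem hasDerivAt_trace_mul {n : ℕ} (A B : ℝ → Matrix (Fin n) (Fin n) ℝ)
    (A' B' : Matrix (Fin n) (Fin n) ℝ) (t : ℝ)
    (hA : ∀ i j, HasDerivAt (fun s => A s i j) (A' i j) t)
    (hB : ∀ i j, HasDerivAt (fun s => B s i j) (B' i j) t) :
    HasDerivAt (fun s => (A s * B s).trace) ((A' * B t).trace + (A t * B').trace) t := by
  simp only [Matrix.trace, Matrix.diag, Matrix.mul_apply, ← Finset.sum_add_distrib]
  exact HasDerivAt.fun_sum fun i _ => HasDerivAt.fun_sum fun j _ => (hA i j).mul (hB j i)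

/-- If C(t) is a C² family of symmetric matrices with
16 tr(C'∘C²) - 3 tr(C'∘C'') = 0 for all t, then
t ↦ tr(32 C(t)³ - 9 C'(t)∘C'(t)) is constant. -/
theorem stmt10 {n : ℕ} (C C1 C2 : ℝ → Matrix (Fin n) (Fin n) ℝ)
    (hsymm : ∀ t, (C t).IsSymm)
    (hd1 : ∀ t i j, HasDerivAt (fun s => C s i j) (C1 t i j) t)
    (hd2 : ∀ t i j, HasDerivAt (fun s => C1 s i j) (C2 t i j) t)
    (h : ∀ t, 16 * (C1 t * (C t * C t)).trace - 3 * (C1 t * C2 t).trace = 0) :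
    ∀ t, 32 * (C t * C t * C t).trace - 9 * (C1 t * C1 t).trace =
      32 * (C 0 * C 0 * C 0).trace - 9 * (C1 0 * C1 0).trace := by
  have key : ∀ t, HasDerivAt
      (fun s => 32 * (C s * C s * C s).trace - 9 * (C1 s * C1 s).trace) 0 t := by
    intro t
    have hCC : ∀ i j, HasDerivAt (fun s => (C s * C s) i j)
        ((C1 t * C t + C t * C1 t) i j) t :=
      hasDerivAt_entry_mul C C (C1 t) (C1 t) t (hd1 t) (hd1 t)
    have h3 : HasDerivAt (fun s => ((C s * C s) * C s).trace)
        (((C1 t * C t + C t * C1 t) * C t).trace + ((C t * C t) * C1 t).trace) t :=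
      hasDerivAt_trace_mul (fun s => C s * C s) C (C1 t * C t + C t * C1 t) (C1 t) t hCC (hd1 t)
    have h2 : HasDerivAt (fun s => (C1 s * C1 s).trace)
        ((C2 t * C1 t).trace + (C1 t * C2 t).trace) t :=
      hasDerivAt_trace_mul C1 C1 (C2 t) (C2 t) t (hd2 t) (hd2 t)
    have hcomb := (h3.const_mul (32 : ℝ)).sub (h2.const_mul (9 : ℝ))
    have e1 : ((C1 t * C t + C t * C1 t) * C t).trace + ((C t * C t) * C1 t).trace
        = 3 * (C1 t * (C t * C t)).trace := by
      rw [Matrix.add_mul, Matrix.trace_add,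
        Matrix.trace_mul_cycle (C t) (C1 t) (C t),
        Matrix.trace_mul_cycle (C t) (C t) (C1 t), Matrix.mul_assoc]
      ring
    have e2 : (C2 t * C1 t).trace + (C1 t * C2 t).trace = 2 * (C1 t * C2 t).trace := by
      rw [Matrix.trace_mul_comm]; ring
    rw [e1, e2] at hcomb
    have hz : 32 * (3 * (C1 t * (C t * C t)).trace) - 9 * (2 * (C1 t * C2 t).trace) = 0 := by
      have := h t; linarith
    rw [hz] at hcomb
    exact hcomb
  intro t
  exact is_const_of_deriv_eq_zero
    (fun x => (key x).differentiableAt)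
    (fun x => (key x).deriv) t 0
end

section
/- Assume tr R_v^{(k)} = 0 for all k ≥ 1, tr(R_v∘R_v') = 0, tr(R_v'∘R_v' + R_v∘R_v'') = 0, and tr(3R_v''∘R_v' + R_v∘R_v^{(3)}) = 0 for all unit v. Then L_7 = tr C_v^{(7)}(0) = 0 is equivalent to 16·tr(R_v' ∘ R_v^2) - 3·tr(R_v' ∘ R_v'') = 0, using the explicit formula for C_v^{(7)}(0). -/
/-- Under tr R^{(k)} = 0 (k ≥ 1), tr(R∘R') = 0, tr(R'∘R' + R∘R'') = 0 and
tr(3R''∘R' + R∘R^{(3)}) = 0, the Ledger condition L_7 = tr C_v^{(7)}(0) = 0 is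
equivalent to 16 tr(R'∘R²) - 3 tr(R'∘R'') = 0. -/
theorem stmt12 {n : ℕ} (R0 R1 R2 R3 R5 C7 : Matrix (Fin n) (Fin n) ℝ)
    (h0 : R0.IsSymm) (h1 : R1.IsSymm) (h2 : R2.IsSymm) (h3 : R3.IsSymm) (h5 : R5.IsSymm)
    (ht1 : R1.trace = 0) (ht2 : R2.trace = 0) (ht3 : R3.trace = 0) (ht5 : R5.trace = 0)
    (hL5 : (R0 * R1).trace = 0)
    (hd1 : (R1 * R1).trace + (R0 * R2).trace = 0)
    (hd2 : 3 * (R2 * R1).trace + (R0 * R3).trace = 0)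
    (hC7 : C7 = -(7 / 12 : ℝ) • ((9 : ℝ) • R5 + (10 : ℝ) • (R0 * R3) + (10 : ℝ) • (R3 * R0)
      + (27 : ℝ) • (R1 * R2) + (27 : ℝ) • (R2 * R1)
      + (11 : ℝ) • (R0 * R0 * R1) + (11 : ℝ) • (R1 * R0 * R0)
      + (10 : ℝ) • (R0 * R1 * R0))) :
    C7.trace = 0 ↔ 16 * (R1 * (R0 * R0)).trace - 3 * (R1 * R2).trace = 0 := by
  subst hC7
  have c1 : (R3 * R0).trace = (R0 * R3).trace := Matrix.trace_mul_comm _ _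
  have c2 : (R2 * R1).trace = (R1 * R2).trace := Matrix.trace_mul_comm _ _
  have c3 : (R0 * R0 * R1).trace = (R1 * (R0 * R0)).trace := Matrix.trace_mul_comm _ _
  have c4 : (R1 * R0 * R0).trace = (R1 * (R0 * R0)).trace := by rw [mul_assoc]
  have c5 : (R0 * R1 * R0).trace = (R1 * (R0 * R0)).trace := by
    rw [Matrix.trace_mul_comm, ← mul_assoc]
    exact c3
  simp only [Matrix.trace_smul, Matrix.trace_add, smul_eq_mul]
  rw [c1, c2, c3, c4, c5, ht5]
  constructor <;> intro h <;> nlinarith [h, hd2, c2]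
end
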